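/- Let H be a clutter, T a minimal transversal of H, S ⊆ V(H), and x a vertex of H. Then either (i) there exists a minimal transversal T' ⊆ T \ {x} of H \ x such that T' ∩ S = (T \ {x}) ∩ S; or (ii) there exist a vertex z ∈ S \ {x} and an edge h of H with x ∈ h, h ∩ T = {z}, and T \ {z} is a minimal transversal of H ∘ (h, x, z). -/

import Mathlib

open Set

universe u

variable {V : Type u}

/-- A set of vertices is independent if no two of its members are adjacent. -/
def IndepSet (G : SimpleGraph V) (I : Set V) : Prop :=
  I.Pairwise (fun u v => ¬ G.Adj u v)

/-- A maximal independent set of a graph. -/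
def MaxIndep (G : SimpleGraph V) (I : Set V) : Prop :=
  IndepSet G I ∧ ∀ J : Set V, IndepSet G J → I ⊆ J → J = I

/-- An induced matching with `k` edges `a i b i`: the `2k` endpoints are pairwise
distinct and the only edges of `G` between them are the matching edges themselves. -/
def IsInducedMatching (G : SimpleGraph V) (k : ℕ) (a b : Fin k → V) : Prop :=
  (∀ i, G.Adj (a i) (b i)) ∧
  ∀ i j, i ≠ j → ∀ x ∈ ({a i, b i} : Set V), ∀ y ∈ ({a j, b j} : Set V),
    x ≠ y ∧ ¬ G.Adj x y

/-- `μ_G(S)`: maximum size of an induced matching each of whose edges meets `S`. -/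
noncomputable def muS (G : SimpleGraph V) (S : Set V) : ℕ :=
  sSup {k | ∃ a b : Fin k → V, IsInducedMatching G k a b ∧ ∀ i, a i ∈ S ∨ b i ∈ S}

/-- `α_G(S)`: maximum size of an independent set contained in `S`. -/
noncomputable def alphaS (G : SimpleGraph V) (S : Set V) : ℕ :=
  sSup {n | ∃ I : Set V, I ⊆ S ∧ IndepSet G I ∧ I.ncard = n}

/-- The trace (restriction) of a set family on `S`. -/
def trace (S : Set V) (F : Set (Set V)) : Set (Set V) :=
  (fun I => I ∩ S) '' F

/-- A hypergraph (given by its edge set) is a clutter if no edge properly contains another. -/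
def IsClutter (E : Set (Set V)) : Prop := ∀ h ∈ E, ∀ f ∈ E, f ⊆ h → f = h

/-- A transversal of a hypergraph: a set meeting every edge. -/
def IsTransversal (E : Set (Set V)) (T : Set V) : Prop := ∀ h ∈ E, (T ∩ h).Nonempty

/-- The blocker: the clutter of all inclusion-wise minimal transversals. -/
def blocker (E : Set (Set V)) : Set (Set V) :=
  {T | IsTransversal E T ∧ ∀ T' ⊆ T, IsTransversal E T' → T' = T}

/-- Inclusion-wise minimal members of a family of sets. -/
def minEdges (F : Set (Set V)) : Set (Set V) := {h ∈ F | ∀ f ∈ F, f ⊆ h → f = h}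

/-- Deletion of a vertex from a clutter. -/
def del (E : Set (Set V)) (v : V) : Set (Set V) := {h ∈ E | v ∉ h}

/-- Contraction of a vertex in a clutter. -/
def contr (E : Set (Set V)) (v : V) : Set (Set V) :=
  minEdges ((fun h => h \ {v}) '' E)

/-- Contraction of a set of vertices in a clutter. -/
def contrSet (E : Set (Set V)) (B : Set V) : Set (Set V) :=
  minEdges ((fun h => h \ B) '' E)

/-- Join of two clutters: minimal elements of the union of the edge sets. -/
def cJoin (E F : Set (Set V)) : Set (Set V) := minEdges (E ∪ F)

/-- Meet of two clutters: minimal elements of pairwise unions of edges. -/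
def cMeet (E F : Set (Set V)) : Set (Set V) :=
  minEdges {s | ∃ h ∈ E, ∃ f ∈ F, s = h ∪ f}

/-- `H ∘ (h, u, v) = H[u; h∖{u}] ∨ H[v; h∖{v}]`. -/
def cOp (E : Set (Set V)) (h : Set V) (u v : V) : Set (Set V) :=
  cJoin (contrSet (del E u) (h \ {u})) (contrSet (del E v) (h \ {v}))

/-- An independent (stable) set of a hypergraph: contains no edge. -/
def HIndep (E : Set (Set V)) (I : Set V) : Prop := ∀ h ∈ E, ¬ h ⊆ I

/-- A maximal independent set of a hypergraph. -/
def MaxHIndep (E : Set (Set V)) (I : Set V) : Prop :=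
  HIndep E I ∧ ∀ J : Set V, HIndep E J → I ⊆ J → J = I

/-- The Gaifman graph of a hypergraph. -/
def gaif (E : Set (Set V)) : SimpleGraph V :=
  SimpleGraph.fromRel (fun u v => ∃ h ∈ E, u ∈ h ∧ v ∈ h)

/-- A well-behaved hypergraph width measure. -/
structure WellBehaved (lam : Set (Set V) → Set V → ℚ) : Prop where
  one : ∀ (E : Set (Set V)) (x : V), 1 ≤ lam E {x}
  subadd : ∀ (E : Set (Set V)) (S T : Set V), lam E (S ∪ T) ≤ lam E S + lam E T
  add : ∀ (E : Set (Set V)) (S T : Set V), Disjoint S T →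
    (∀ s ∈ S, ∀ t ∈ T, ¬ (gaif E).Adj s t) → lam E (S ∪ T) = lam E S + lam E T
  mono : ∀ (E F : Set (Set V)) (S T : Set V), E ⊆ F → S ⊆ T → lam F S ≤ lam E T

/-- `(T, bag)` is a tree decomposition of `G`. -/
structure IsTreeDecomp {ι : Type} (G : SimpleGraph V) (T : SimpleGraph ι)
    (bag : ι → Set V) : Prop where
  conn : T.Connected
  acyclic : T.IsAcyclic
  edge_cover : ∀ ⦃u v : V⦄, G.Adj u v → ∃ t, u ∈ bag t ∧ v ∈ bag t
  vert_conn : ∀ v : V, (T.induce {t | v ∈ bag t}).Connected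

/-- The `λ`-treewidth of `G` for a width measure `lam` on bags. -/
noncomputable def lamTW (G : SimpleGraph V) (lam : Set V → ℕ) : ℕ :=
  sInf {k | ∃ (ι : Type) (T : SimpleGraph ι) (bag : ι → Set V),
    IsTreeDecomp G T bag ∧ ∀ t, lam (bag t) ≤ k}

/-- `M(G)`: attach a pendant vertex to every vertex of `G`. -/
def pend (G : SimpleGraph V) : SimpleGraph (V ⊕ V) :=
  SimpleGraph.fromRel (fun x y =>
    match x, y with
    | Sum.inl u, Sum.inl v => G.Adj u v
    | Sum.inl u, Sum.inr v => u = v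
    | _, _ => False)

/-- `L²(G)`: vertices are the edges of `G`; two distinct edges are adjacent iff
their union induces a connected subgraph. -/
def L2 (G : SimpleGraph V) : SimpleGraph G.edgeSet :=
  SimpleGraph.fromRel (fun e f =>
    ∃ x ∈ (e : Sym2 V), ∃ y ∈ (f : Sym2 V), x = y ∨ G.Adj x y)

/-- The Gaifman graph with a set `S` of vertices removed (vertices of `S` become isolated). -/
def gaifMinus (E : Set (Set V)) (S : Set V) : SimpleGraph V :=
  SimpleGraph.fromRel (fun u v => (gaif E).Adj u v ∧ u ∉ S ∧ v ∉ S)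

/-- `S` is an `(A, B)`-separator: `A ∩ B ⊆ S` and every walk from `A` to `B` meets `S`. -/
def IsSeparator (G : SimpleGraph V) (A B S : Set V) : Prop :=
  A ∩ B ⊆ S ∧ ∀ a ∈ A, ∀ b ∈ B, ∀ p : G.Walk a b, ∃ x ∈ p.support, x ∈ S

/-- Minors of clutters: obtained by repeated deletions and contractions. -/
inductive IsMinor : Set (Set V) → Set (Set V) → Prop
  | refl (E : Set (Set V)) : IsMinor E E
  | delStep {F E : Set (Set V)} (v : V) : IsMinor F E → IsMinor (del F v) E
  | contrStep {F E : Set (Set V)} (v : V) : IsMinor F E → IsMinor (contr F v) E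


section AuxStmt7

variable {V : Type} [Fintype V]

/-- In a finite universe, every member of a family of sets contains an
inclusion-minimal member. -/
lemma exists_min_mem {F : Set (Set V)} {g : Set V} (hg : g ∈ F) :
    ∃ g' ∈ F, g' ⊆ g ∧ ∀ f ∈ F, f ⊆ g' → f = g' := by
  classical
  obtain ⟨g', hg', hmin⟩ := Set.Finite.exists_minimalFor id {f ∈ F | f ⊆ g}
    (Set.toFinite _) ⟨g, hg, subset_rfl⟩
  exact ⟨g', hg'.1, hg'.2, fun f hf hfg' => Set.Subset.antisymm hfg' (hmin ⟨hf, hfg'.trans hg'.2⟩ hfg')⟩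

/-- Every vertex of a minimal transversal has a private edge. -/
lemma private_edge {E : Set (Set V)} {T : Set V} (hT : T ∈ blocker E)
    {z : V} (hz : z ∈ T) : ∃ h ∈ E, h ∩ T = {z} := by
  by_contra hcon
  push_neg at hcon
  have htr : IsTransversal E (T \ {z}) := by
    intro f hf
    by_cases hex : ((T \ {z}) ∩ f).Nonempty
    · exact hex
    · exfalso
      refine hcon f hf ?_
      apply Set.Subset.antisymm
      · rintro y ⟨hyf, hyT⟩
        rw [Set.mem_singleton_iff]
        by_contra hyz
        exact hex ⟨y, ⟨hyT, fun hm => hyz (Set.mem_singleton_iff.1 hm)⟩, hyf⟩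
      · intro y hy
        rw [Set.mem_singleton_iff] at hy
        subst hy
        obtain ⟨t, htT, htf⟩ := hT.1 f hf
        rcases eq_or_ne t y with rfl | hne
        · exact ⟨htf, htT⟩
        · exact absurd ⟨t, ⟨htT, fun hm => hne (Set.mem_singleton_iff.1 hm)⟩, htf⟩ hex
  have heq : T \ {z} = T := hT.2 (T \ {z}) Set.diff_subset htr
  have hzz : z ∈ T \ {z} := by rw [heq]; exact hz
  exact hzz.2 rfl

lemma cOp_subset (E : Set (Set V)) (h : Set V) (x z : V) :
    cOp E h x z ⊆ ((fun f => f \ (h \ {x})) '' (del E x)) ∪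
      ((fun f => f \ (h \ {z})) '' (del E z)) := by
  intro g hg
  rcases hg.1 with h1 | h2
  · exact Or.inl h1.1
  · exact Or.inr h2.1

lemma cOp_below (E : Set (Set V)) (h : Set V) (x z : V) {g : Set V}
    (hg : g ∈ ((fun f => f \ (h \ {x})) '' (del E x)) ∪
      ((fun f => f \ (h \ {z})) '' (del E z))) :
    ∃ g' ∈ cOp E h x z, g' ⊆ g := by
  obtain ⟨g', hg'F, hg'sub, hg'min⟩ := exists_min_mem hg
  refine ⟨g', ?_, hg'sub⟩
  have hmem : g' ∈ contrSet (del E x) (h \ {x}) ∪ contrSet (del E z) (h \ {z}) := by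
    rcases hg'F with h1 | h2
    · exact Or.inl ⟨h1, fun f hf hsub => hg'min f (Or.inl hf) hsub⟩
    · exact Or.inr ⟨h2, fun f hf hsub => hg'min f (Or.inr hf) hsub⟩
  refine ⟨hmem, fun f hf hsub => ?_⟩
  rcases hf with h1 | h2
  · exact hg'min f (Or.inl h1.1) hsub
  · exact hg'min f (Or.inr h2.1) hsub

end AuxStmt7

/-- the two types of minimal transversals. -/
theorem stmt_7 {V : Type} [Fintype V] (E : Set (Set V)) (hC : IsClutter E)
    (T : Set V) (hT : T ∈ blocker E) (S : Set V) (x : V) :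
    (∃ T' ⊆ T \ {x}, T' ∈ blocker (del E x) ∧ T' ∩ S = (T \ {x}) ∩ S) ∨
    (∃ z ∈ S \ {x}, ∃ h ∈ E, x ∈ h ∧ h ∩ T = {z} ∧
      T \ {z} ∈ blocker (cOp E h x z)) := by
  classical
  -- T \ {x} is a transversal of del E x
  have hT0tr : IsTransversal (del E x) (T \ {x}) := by
    rintro f ⟨hfE, hxf⟩
    obtain ⟨t, htT, htf⟩ := hT.1 f hfE
    exact ⟨t, ⟨htT, fun ht => hxf (Set.mem_singleton_iff.1 ht ▸ htf)⟩, htf⟩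
  have hmem : (T \ {x}) ∈ {U : Set V | (T \ {x}) ∩ S ⊆ U ∧ U ⊆ T \ {x} ∧
      IsTransversal (del E x) U} :=
    ⟨Set.inter_subset_left, subset_rfl, hT0tr⟩
  obtain ⟨U, ⟨hAU, hUT₀, hUtr⟩, _, hUmin⟩ := exists_min_mem hmem
  by_cases hB : U ∈ blocker (del E x)
  · left
    refine ⟨U, hUT₀, hB, ?_⟩
    apply Set.Subset.antisymm
    · exact Set.inter_subset_inter_left S hUT₀
    · intro y hy
      exact ⟨hAU hy, hy.2⟩
  · right
    have hnot : ¬ ∀ T' ⊆ U, IsTransversal (del E x) T' → T' = U := fun hm => hB ⟨hUtr, hm⟩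
    push_neg at hnot
    obtain ⟨U', hU'U, hU'tr, hU'ne⟩ := hnot
    have hz : ∃ z ∈ (T \ {x}) ∩ S, z ∉ U' := by
      by_contra hcon
      push_neg at hcon
      exact hU'ne (hUmin U' ⟨hcon, hU'U.trans hUT₀, hU'tr⟩ hU'U)
    obtain ⟨z, hzA, hzU'⟩ := hz
    have hzT : z ∈ T := hzA.1.1
    have hzx : z ≠ x := fun h => hzA.1.2 (Set.mem_singleton_iff.2 h)
    -- (★) : T \ {z} is a transversal of del E x
    have hstar : IsTransversal (del E x) (T \ {z}) := by
      intro f hf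
      obtain ⟨t, htU', htf⟩ := hU'tr f hf
      exact ⟨t, ⟨(hUT₀ (hU'U htU')).1,
        fun ht => hzU' (Set.mem_singleton_iff.1 ht ▸ htU')⟩, htf⟩
    obtain ⟨h, hhE, hhT⟩ := private_edge hT hzT
    have hxh : x ∈ h := by
      by_contra hxh
      obtain ⟨t, htTz, hth⟩ := hstar h ⟨hhE, hxh⟩
      have hm : t ∈ h ∩ T := ⟨hth, htTz.1⟩
      rw [hhT] at hm
      exact htTz.2 hm
    refine ⟨z, ⟨hzA.2, hzA.1.2⟩, h, hhE, hxh, hhT, ?_, ?_⟩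
    · -- T \ {z} is a transversal of cOp E h x z
      intro g hg
      rcases cOp_subset E h x z hg with hg1 | hg2
      · obtain ⟨f, ⟨hfE, hxf⟩, rfl⟩ := hg1
        obtain ⟨t, htTz, htf⟩ := hstar f ⟨hfE, hxf⟩
        refine ⟨t, htTz, htf, ?_⟩
        rintro ⟨hth, _⟩
        have hm : t ∈ h ∩ T := ⟨hth, htTz.1⟩
        rw [hhT] at hm
        exact htTz.2 hm
      · obtain ⟨f, ⟨hfE, hzf⟩, rfl⟩ := hg2
        obtain ⟨t, htT, htf⟩ := hT.1 f hfE
        have htz : t ≠ z := fun e => hzf (e ▸ htf)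
        refine ⟨t, ⟨htT, fun e => htz (Set.mem_singleton_iff.1 e)⟩, htf, ?_⟩
        rintro ⟨hth, _⟩
        have hm : t ∈ h ∩ T := ⟨hth, htT⟩
        rw [hhT] at hm
        exact htz (Set.mem_singleton_iff.1 hm)
    · -- minimality
      intro T'' hT''sub hT''tr
      refine Set.Subset.antisymm hT''sub ?_
      intro t htTz
      have htT : t ∈ T := htTz.1
      have htz : t ≠ z := fun e => htTz.2 (Set.mem_singleton_iff.2 e)
      obtain ⟨f, hfE, hfT⟩ := private_edge hT htT
      have hzf : z ∉ f := by
        intro hzf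
        have hm : z ∈ f ∩ T := ⟨hzf, hzT⟩
        rw [hfT] at hm
        exact htz (Set.mem_singleton_iff.1 hm).symm
      obtain ⟨g', hg'cOp, hg'sub⟩ := cOp_below E h x z
        (Or.inr ⟨f, ⟨hfE, hzf⟩, rfl⟩)
      obtain ⟨s, hsT'', hsg'⟩ := hT''tr g' hg'cOp
      have hsTz := hT''sub hsT''
      have hsf : s ∈ f := (hg'sub hsg').1
      have hm : s ∈ f ∩ T := ⟨hsf, hsTz.1⟩
      rw [hfT] at hm
      have hst : s = t := Set.mem_singleton_iff.1 hm
      exact hst ▸ hsT''
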